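/- Fix c ∈ [0,1] and let f_c(y) = ∫₀¹ 𝟙{|x − y| ≤ c} dx. Then for every natural number ℓ ≥ 1, ∫₀¹ f_c(y)^ℓ dy = (2/(ℓ+1))·((min(2c,1))^{ℓ+1} − c^{ℓ+1}) + |2c − 1|·(min(2c,1))^ℓ. -/

import Mathlib

open MeasureTheory

lemma inner_cross (c y : ℝ) (hc0 : 0 ≤ c) (hy0 : 0 ≤ y) (hy1 : y ≤ 1) :
    (∫ x in (0:ℝ)..1, (if |x - y| ≤ c then (1:ℝ) else 0))
      = min (y + c) 1 - max (y - c) 0 := by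
  have h1 : ∀ x : ℝ, (if |x - y| ≤ c then (1:ℝ) else 0)
      = Set.indicator (Set.Icc (y - c) (y + c)) (fun _ => (1:ℝ)) x := by
    intro x
    rw [Set.indicator_apply]
    congr 1
    simp only [Set.mem_Icc, abs_le, eq_iff_iff]
    constructor <;> intro h <;> constructor <;> linarith [h.1, h.2]
  simp_rw [h1]
  rw [intervalIntegral.integral_of_le (by norm_num : (0:ℝ) ≤ 1),
    MeasureTheory.setIntegral_indicator measurableSet_Icc]
  rcases le_or_gt (y - c) 0 with h | h
  · have hset : Set.Ioc (0:ℝ) 1 ∩ Set.Icc (y - c) (y + c) = Set.Ioc 0 (min (y + c) 1) := by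
      ext x
      simp only [Set.mem_inter_iff, Set.mem_Ioc, Set.mem_Icc, le_min_iff, lt_min_iff]
      constructor
      · rintro ⟨⟨h1, h2⟩, h3, h4⟩; exact ⟨h1, h4, h2⟩
      · rintro ⟨h1, h2, h3⟩; exact ⟨⟨h1, h3⟩, by linarith, h2⟩
    rw [hset]
    simp [Real.volume_Ioc]
    rw [max_eq_left (le_min (by linarith) (by norm_num))]
    have : max (y - c) 0 = 0 := max_eq_right h
    rw [this]; ring
  · have hset : Set.Ioc (0:ℝ) 1 ∩ Set.Icc (y - c) (y + c) = Set.Icc (y - c) (min (y + c) 1) := by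
      ext x
      simp only [Set.mem_inter_iff, Set.mem_Ioc, Set.mem_Icc, le_min_iff]
      constructor
      · rintro ⟨⟨h1, h2⟩, h3, h4⟩; exact ⟨h3, h4, h2⟩
      · rintro ⟨h1, h2, h3⟩; exact ⟨⟨by linarith, h3⟩, h1, h2⟩
    rw [hset]
    simp [Real.volume_Icc]
    rw [max_eq_left (sub_nonneg.mpr (le_min (by linarith) (by linarith)))]
    have : max (y - c) 0 = y - c := max_eq_left h.le
    rw [this]

lemma g_integrable (c a b : ℝ) :
    IntervalIntegrable (fun y : ℝ => (min (y + c) 1 - max (y - c) 0) ^ ℓ) volume a b := by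
  apply Continuous.intervalIntegrable
  fun_prop

/-- The moments of the cross-section function of the banded strip. -/
theorem cross_section_moments (c : ℝ) (hc0 : 0 ≤ c) (hc1 : c ≤ 1) (ℓ : ℕ) (hℓ : 1 ≤ ℓ) :
    (∫ y in (0:ℝ)..1, (∫ x in (0:ℝ)..1, (if |x - y| ≤ c then (1:ℝ) else 0))^ℓ)
      = (2/((ℓ:ℝ)+1)) * ((min (2*c) 1)^(ℓ+1) - c^(ℓ+1)) + |2*c - 1| * (min (2*c) 1)^ℓ := by
  have hℓ1 : ((ℓ:ℝ) + 1) ≠ 0 := by positivity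
  rw [intervalIntegral.integral_congr
      (g := fun y : ℝ => (min (y + c) 1 - max (y - c) 0) ^ ℓ)
      (by
        intro y hy
        dsimp only
        rw [Set.uIcc_of_le (by norm_num : (0:ℝ) ≤ 1), Set.mem_Icc] at hy
        rw [inner_cross c y hc0 hy.1 hy.2])]
  rcases le_or_gt c (1/2) with hc | hc
  · -- c ≤ 1/2
    have hmin : min (2*c) 1 = 2*c := min_eq_left (by linarith)
    have habs : |2*c - 1| = 1 - 2*c := by rw [abs_of_nonpos (by linarith)]; ring
    rw [hmin, habs]
    rw [← intervalIntegral.integral_add_adjacent_intervals (b := c)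
        (g_integrable c 0 c) (g_integrable c c 1),
      ← intervalIntegral.integral_add_adjacent_intervals (a := c) (b := 1 - c)
        (g_integrable c c (1-c)) (g_integrable c (1-c) 1)]
    have e1 : (∫ y in (0:ℝ)..c, (min (y + c) 1 - max (y - c) 0) ^ ℓ)
        = ((2*c)^(ℓ+1) - c^(ℓ+1)) / ((ℓ:ℝ)+1) := by
      rw [intervalIntegral.integral_congr (g := fun y : ℝ => (y + c) ^ ℓ)
        (by
          intro y hy
          dsimp only
          rw [Set.uIcc_of_le hc0, Set.mem_Icc] at hy
          have h1 : min (y + c) 1 = y + c := min_eq_left (by linarith [hy.1, hy.2])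
          have h2 : max (y - c) 0 = 0 := max_eq_right (by linarith [hy.2])
          simp [h1, h2])]
      rw [intervalIntegral.integral_comp_add_right (fun x => x ^ ℓ) c, integral_pow]
      norm_num
      ring_nf
    have e3 : (∫ y in (1-c:ℝ)..1, (min (y + c) 1 - max (y - c) 0) ^ ℓ)
        = ((2*c)^(ℓ+1) - c^(ℓ+1)) / ((ℓ:ℝ)+1) := by
      rw [intervalIntegral.integral_congr (g := fun y : ℝ => (1 + c - y) ^ ℓ)
        (by
          intro y hy
          dsimp only
          rw [Set.uIcc_of_le (by linarith), Set.mem_Icc] at hy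
          have h1 : min (y + c) 1 = 1 := min_eq_right (by linarith [hy.1])
          have h2 : max (y - c) 0 = y - c := max_eq_left (by linarith [hy.1])
          rw [h1, h2]; ring_nf)]
      rw [intervalIntegral.integral_comp_sub_left (fun x => x ^ ℓ) (1 + c), integral_pow]
      norm_num
      ring_nf
    have e2 : (∫ y in (c:ℝ)..(1-c), (min (y + c) 1 - max (y - c) 0) ^ ℓ)
        = (1 - 2*c) * (2*c) ^ ℓ := by
      rw [intervalIntegral.integral_congr (g := fun _ : ℝ => (2*c) ^ ℓ)
        (by
          intro y hy
          dsimp only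
          rw [Set.uIcc_of_le (by linarith), Set.mem_Icc] at hy
          have h1 : min (y + c) 1 = y + c := min_eq_left (by linarith [hy.2])
          have h2 : max (y - c) 0 = y - c := max_eq_left (by linarith [hy.1])
          rw [h1, h2]; ring_nf)]
      rw [intervalIntegral.integral_const]
      simp only [smul_eq_mul]
      ring
    rw [e1, e2, e3]
    field_simp
    ring
  · -- c > 1/2
    have hmin : min (2*c) 1 = 1 := min_eq_right (by linarith)
    have habs : |2*c - 1| = 2*c - 1 := abs_of_nonneg (by linarith)
    rw [hmin, habs]
    rw [← intervalIntegral.integral_add_adjacent_intervals (b := 1 - c)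
        (g_integrable c 0 (1-c)) (g_integrable c (1-c) 1),
      ← intervalIntegral.integral_add_adjacent_intervals (a := 1-c) (b := c)
        (g_integrable c (1-c) c) (g_integrable c c 1)]
    have e1 : (∫ y in (0:ℝ)..(1-c), (min (y + c) 1 - max (y - c) 0) ^ ℓ)
        = (1 - c^(ℓ+1)) / ((ℓ:ℝ)+1) := by
      rw [intervalIntegral.integral_congr (g := fun y : ℝ => (y + c) ^ ℓ)
        (by
          intro y hy
          dsimp only
          rw [Set.uIcc_of_le (by linarith), Set.mem_Icc] at hy
          have h1 : min (y + c) 1 = y + c := min_eq_left (by linarith [hy.2])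
          have h2 : max (y - c) 0 = 0 := max_eq_right (by linarith [hy.2])
          simp [h1, h2])]
      rw [intervalIntegral.integral_comp_add_right (fun x => x ^ ℓ) c, integral_pow]
      norm_num
    have e3 : (∫ y in (c:ℝ)..1, (min (y + c) 1 - max (y - c) 0) ^ ℓ)
        = (1 - c^(ℓ+1)) / ((ℓ:ℝ)+1) := by
      rw [intervalIntegral.integral_congr (g := fun y : ℝ => (1 + c - y) ^ ℓ)
        (by
          intro y hy
          dsimp only
          rw [Set.uIcc_of_le hc1, Set.mem_Icc] at hy
          have h1 : min (y + c) 1 = 1 := min_eq_right (by linarith [hy.1])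
          have h2 : max (y - c) 0 = y - c := max_eq_left (by linarith [hy.1])
          rw [h1, h2]; ring_nf)]
      rw [intervalIntegral.integral_comp_sub_left (fun x => x ^ ℓ) (1 + c), integral_pow]
      norm_num
    have e2 : (∫ y in (1-c:ℝ)..c, (min (y + c) 1 - max (y - c) 0) ^ ℓ)
        = 2*c - 1 := by
      rw [intervalIntegral.integral_congr (g := fun _ : ℝ => (1:ℝ))
        (by
          intro y hy
          dsimp only
          rw [Set.uIcc_of_le (by linarith), Set.mem_Icc] at hy
          have h1 : min (y + c) 1 = 1 := min_eq_right (by linarith [hy.1])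
          have h2 : max (y - c) 0 = 0 := max_eq_right (by linarith [hy.2])
          simp [h1, h2])]
      rw [intervalIntegral.integral_const]
      simp only [smul_eq_mul]
      ring
    rw [e1, e2, e3]
    field_simp
    ring
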